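/- With T̃ = G/N as above (G = {(a,b) ∈ (ℂ^×)ⁿ×(ℂ^×)ⁿ : ∏ a_kb_k = 1}, N = {(x,x) : ∏ x_k = 1}), let θ : T̃ → T̃ be the automorphism induced by (a₁,…,a_n; b₁,…,b_n) ↦ (a₁,…,a_{n−1}, b_n; b₁,…,b_{n−1}, a_n). Then θ fixes ker t̃ pointwise, but for the element c = [(i,…,i),(−i,…,−i)] ∈ T̃ (where i = √−1, noting ∏ i·(−i) = 1), one has θ(c) ≠ c; in fact θ(c)·c^{-1} is the unique non-trivial element of ker t̃, and u(θ(c)c^{-1}) = −1. -/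
import Mathlib


/-- The ambient group `(ℂ^×)ⁿ × (ℂ^×)ⁿ`. -/
abbrev Mn (n : ℕ) := (Fin n → ℂˣ) × (Fin n → ℂˣ)

lemma prod_update_one' {n : ℕ} (j : Fin n) (v : ℂˣ) :
    (∏ k, Function.update (fun _ => (1:ℂˣ)) j v k) = v := by
  rw [Finset.prod_update_of_mem (Finset.mem_univ j)]
  simp

lemma neg_one_ne_one_units : (-1 : ℂˣ) ≠ 1 := by
  intro h
  have := congrArg Units.val h
  simp at this
  norm_num at this

/-- with `T̃ = G/N` as in Statement 7, the automorphism `θ` induced by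
swapping the n-th coordinates of the two vectors fixes `ker t̃` pointwise, but moves
the central element `c = [(i,…,i),(−i,…,−i)]`: indeed `θ(c)·c⁻¹` is the unique
non-trivial element of `ker t̃` and `u(θ(c)c⁻¹) = −1`. -/
theorem stmt8 (n : ℕ) (hn : 1 ≤ n)
    (G : Subgroup (Mn n))
    (hG : ∀ p : Mn n, p ∈ G ↔ (∏ k, p.1 k * p.2 k) = 1)
    (N : Subgroup G)
    (hN : ∀ q : G, q ∈ N ↔
      ((q : Mn n).1 = (q : Mn n).2 ∧ (∏ k, (q : Mn n).1 k) = 1)) :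
    let j : Fin n := ⟨n - 1, by omega⟩
    let Iu : ℂˣ := Units.mk0 Complex.I Complex.I_ne_zero
    ∃ t : (G ⧸ N) →* (Fin n → ℂˣ),
      (∀ q : G, t (QuotientGroup.mk q) = fun k => (q : Mn n).1 k * ((q : Mn n).2 k)⁻¹)
      ∧ ∃ θ : (G ⧸ N) →* (G ⧸ N),
        -- θ is induced by swapping the n-th coordinates
        (∀ (q : G)
            (hq' : ((Function.update (q : Mn n).1 j ((q : Mn n).2 j),
                     Function.update (q : Mn n).2 j ((q : Mn n).1 j)) : Mn n) ∈ G),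
            θ (QuotientGroup.mk q) = QuotientGroup.mk (⟨_, hq'⟩ : G))
        -- θ fixes ker t̃ pointwise
        ∧ (∀ x ∈ t.ker, θ x = x)
        -- the element c = [(i,…,i),(−i,…,−i)] exists in T̃ …
        ∧ (∃ q : G, (q : Mn n).1 = (fun _ => Iu) ∧ (q : Mn n).2 = (fun _ => -Iu))
        -- … and for (any representative of) it:
        ∧ (∀ q : G, (q : Mn n).1 = (fun _ => Iu) → (q : Mn n).2 = (fun _ => -Iu) →
            θ (QuotientGroup.mk q) ≠ QuotientGroup.mk q
            ∧ θ (QuotientGroup.mk q) * (QuotientGroup.mk q)⁻¹ ∈ t.ker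
            ∧ θ (QuotientGroup.mk q) * (QuotientGroup.mk q)⁻¹ ≠ 1
            ∧ (∀ x ∈ t.ker, x ≠ 1 →
                x = θ (QuotientGroup.mk q) * (QuotientGroup.mk q)⁻¹)
            -- u(θ(c)c⁻¹) = −1
            ∧ (∀ r : G,
                (QuotientGroup.mk r : G ⧸ N)
                  = θ (QuotientGroup.mk q) * (QuotientGroup.mk q)⁻¹ →
                (∏ k, (r : Mn n).1 k) = -1)) := by
  intro j Iu
  -- basic arithmetic with the unit `i`
  have hImul : Iu * (-Iu) = 1 := by
    ext
    simp [Iu, Complex.I_mul_I]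
  have hInv : Iu⁻¹ = -Iu := by
    rw [eq_comm, eq_inv_iff_mul_eq_one, mul_comm]
    exact hImul
  have hnInv : (-Iu)⁻¹ = Iu := by
    rw [eq_comm, eq_inv_iff_mul_eq_one]
    exact hImul
  have hII : Iu * Iu = -1 := by
    ext
    simp [Iu, Complex.I_mul_I]
  have hnn : (-Iu) * (-Iu) = -1 := by
    rw [neg_mul_neg]; exact hII
  -- the homomorphism t₀ on G
  set t0 : G →* (Fin n → ℂˣ) :=
    { toFun := fun q => fun k => (q : Mn n).1 k * ((q : Mn n).2 k)⁻¹
      map_one' := by ext k; simp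
      map_mul' := by
        intro a b
        ext k
        simp [mul_inv]
        ring } with ht0
  have hNker : N ≤ t0.ker := by
    intro q hq
    obtain ⟨hab, -⟩ := (hN q).1 hq
    have : t0 q = 1 := by
      funext k
      simp [ht0, hab]
    simpa [MonoidHom.mem_ker] using this
  refine ⟨QuotientGroup.lift N t0 hNker, fun q => rfl, ?_⟩
  set t := QuotientGroup.lift N t0 hNker with htdef
  -- the swap map on G
  have hswapG : ∀ q : G, ((Function.update (q : Mn n).1 j ((q : Mn n).2 j),
      Function.update (q : Mn n).2 j ((q : Mn n).1 j)) : Mn n) ∈ G := by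
    intro q
    rw [hG]
    have hq := (hG (q : Mn n)).1 q.2
    rw [← hq]
    refine Finset.prod_congr rfl ?_
    intro k _
    by_cases h : k = j
    · subst h; simp [mul_comm]
    · simp [Function.update_of_ne h]
  set s : G →* G :=
    { toFun := fun q => ⟨_, hswapG q⟩
      map_one' := by
        apply Subtype.ext
        have h1 : ((1 : G) : Mn n) = 1 := rfl
        refine Prod.ext ?_ ?_ <;> simp [h1, Function.update_eq_self]
      map_mul' := by
        intro a b
        apply Subtype.ext
        have hm : ((a * b : G) : Mn n) = (a : Mn n) * (b : Mn n) := rfl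
        refine Prod.ext ?_ ?_ <;>
        · simp only [hm, Prod.fst_mul, Prod.snd_mul]
          funext k
          by_cases h : k = j
          · subst h; simp
          · simp [Function.update_of_ne h] } with hs
  -- if the two components agree, the swap fixes the element
  have hsfix : ∀ q : G, (q : Mn n).1 = (q : Mn n).2 → s q = q := by
    intro q hab
    apply Subtype.ext
    refine Prod.ext ?_ ?_ <;> simp [hs, hab, Function.update_eq_self]
  have hsN : ∀ q ∈ N, s q ∈ N := by
    intro q hq
    obtain ⟨hab, -⟩ := (hN q).1 hq
    rw [hsfix q hab]
    exact hq
  set θ : (G ⧸ N) →* (G ⧸ N) :=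
    QuotientGroup.lift N ((QuotientGroup.mk' N).comp s)
      (fun q hq => (QuotientGroup.eq_one_iff (s q)).2 (hsN q hq)) with hθ
  have hθmk : ∀ q : G, θ (QuotientGroup.mk q) = QuotientGroup.mk (s q) := fun q => rfl
  have htmk : ∀ q : G, t (QuotientGroup.mk q) = t0 q := fun q => rfl
  refine ⟨θ, ?_, ?_, ?_, ?_⟩
  · -- θ is induced by the swap
    intro q hq'
    rw [hθmk]
    congr 1
  · -- θ fixes ker t pointwise
    intro x hx
    induction x using QuotientGroup.induction_on with
    | H q =>
      have h1 : t0 q = 1 := by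
        rw [MonoidHom.mem_ker] at hx
        rw [htmk] at hx
        exact hx
      have hab : (q : Mn n).1 = (q : Mn n).2 := by
        funext k
        have := congrFun h1 k
        simp [ht0] at this
        exact mul_inv_eq_one.1 this
      rw [hθmk, hsfix q hab]
  · -- existence of c
    refine ⟨⟨((fun _ => Iu), (fun _ => -Iu)), ?_⟩, rfl, rfl⟩
    rw [hG]
    simp [hImul]
  · -- the main computations for c
    intro q hq1 hq2
    set e : G := s q * q⁻¹ with he
    have hcoe : (e : Mn n) = (s q : Mn n) * (q : Mn n)⁻¹ := rfl
    have he1 : (e : Mn n).1 = Function.update (fun _ => (1:ℂˣ)) j (-1) := by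
      funext k
      have : (e : Mn n).1 k = (s q : Mn n).1 k * ((q : Mn n).1 k)⁻¹ := rfl
      rw [this]
      by_cases h : k = j
      · subst h
        simp [hs, hq1, hq2, hInv, hnn]
      · simp [hs, Function.update_of_ne h, hq1]
    have he2 : (e : Mn n).2 = Function.update (fun _ => (1:ℂˣ)) j (-1) := by
      funext k
      have : (e : Mn n).2 k = (s q : Mn n).2 k * ((q : Mn n).2 k)⁻¹ := rfl
      rw [this]
      by_cases h : k = j
      · subst h
        simp [hs, hq1, hq2, hnInv, hII]
      · simp [hs, Function.update_of_ne h, hq2]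
    have heprod : (∏ k, (e : Mn n).1 k) = -1 := by
      rw [he1]; exact prod_update_one' j (-1)
    have hmk : θ (QuotientGroup.mk q) * (QuotientGroup.mk q : G ⧸ N)⁻¹
        = QuotientGroup.mk e := by
      rw [hθmk, he]
      rfl
    have hne1 : (QuotientGroup.mk e : G ⧸ N) ≠ 1 := by
      intro h
      rw [QuotientGroup.eq_one_iff] at h
      obtain ⟨-, hp⟩ := (hN e).1 h
      rw [heprod] at hp
      exact neg_one_ne_one_units hp
    have hkey : θ (QuotientGroup.mk q) * (QuotientGroup.mk q : G ⧸ N)⁻¹ ≠ 1 := by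
      rw [hmk]; exact hne1
    refine ⟨?_, ?_, hkey, ?_, ?_⟩
    · -- θ(c) ≠ c
      intro h
      apply hkey
      rw [h, mul_inv_cancel]
    · -- θ(c)c⁻¹ ∈ ker t
      rw [MonoidHom.mem_ker, hmk, htmk]
      funext k
      simp only [ht0, MonoidHom.coe_mk, OneHom.coe_mk, he1, he2]
      exact mul_inv_cancel _
    · -- uniqueness of the nontrivial kernel element
      intro x hx hx1
      induction x using QuotientGroup.induction_on with
      | H r =>
        have h1 : t0 r = 1 := by
          rw [MonoidHom.mem_ker, htmk] at hx
          exact hx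
        have hab : (r : Mn n).1 = (r : Mn n).2 := by
          funext k
          have := congrFun h1 k
          simp [ht0] at this
          exact mul_inv_eq_one.1 this
        have hrG := (hG (r : Mn n)).1 r.2
        have hsq : (∏ k, (r : Mn n).1 k) * (∏ k, (r : Mn n).1 k) = 1 := by
          rw [← Finset.prod_mul_distrib]
          rw [← hrG]
          exact Finset.prod_congr rfl fun k _ => by rw [← hab]
        have hval : ((∏ k, (r : Mn n).1 k : ℂˣ) : ℂ) = 1
            ∨ ((∏ k, (r : Mn n).1 k : ℂˣ) : ℂ) = -1 := by
          have := congrArg Units.val hsq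
          push_cast at this
          exact mul_self_eq_one_iff.1 (by exact_mod_cast this)
        have hprod : (∏ k, (r : Mn n).1 k) = -1 := by
          rcases hval with h | h
          · exfalso
            apply hx1
            rw [QuotientGroup.eq_one_iff, hN]
            exact ⟨hab, Units.ext (by simpa using h)⟩
          · exact Units.ext (by simpa using h)
        rw [hmk]
        rw [QuotientGroup.eq]
        rw [hN]
        constructor
        · have : ((r⁻¹ * e : G) : Mn n) = (r : Mn n)⁻¹ * (e : Mn n) := rfl
          rw [this]
          simp only [Prod.fst_mul, Prod.snd_mul, Prod.fst_inv, Prod.snd_inv]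
          rw [he1, he2, hab]
        · have : ((r⁻¹ * e : G) : Mn n).1 = fun k => ((r : Mn n).1 k)⁻¹ * (e : Mn n).1 k := rfl
          rw [this]
          rw [Finset.prod_mul_distrib, Finset.prod_inv_distrib, hprod, heprod]
          simp
    · -- u(θ(c)c⁻¹) = -1
      intro r hr
      rw [hmk, QuotientGroup.eq] at hr
      obtain ⟨-, hp⟩ := (hN _).1 hr
      have hco : ((r⁻¹ * e : G) : Mn n).1 = fun k => ((r : Mn n).1 k)⁻¹ * (e : Mn n).1 k := rfl
      rw [hco, Finset.prod_mul_distrib, Finset.prod_inv_distrib, heprod] at hp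
      rwa [inv_mul_eq_one] at hp
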